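/- For all $n < \omega$, the Partition Hypothesis $\mathrm{PH}_n(\omega_n)$ fails: there is a coloring $c : (\omega_n)^{n+1} \to \omega$ (or into a countable set) such that for no $(n+1)$-cofinal function $F : (\omega_n)^{\leq n+1} \to \omega_n$ is $c \circ F^\ast$ constant on $(\omega_n)^{\llbracket n+1 \rrbracket}$. -/

import Mathlib

open Cardinal Ordinal

universe u v

lemma kur : ∀ (n : ℕ) (Λ : Type u) (f : Λ → Ordinal.{v}),
    Function.Injective f → (∀ x, f x < (Cardinal.aleph n).ord) →
    ∃ (c : (Fin (n + 1) → Λ) → ℕ) (d : ℕ → Fin (n + 1)),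
      ∀ t t' : Fin (n + 1) → Λ, c t = c t' →
        (∀ m, m ≠ d (c t) → t m = t' m) → t = t' := by
  intro n
  induction n with
  | zero =>
    intro Λ f hinj hf
    have hω : ∀ x, f x < Ordinal.omega0 := by
      intro x
      have := hf x
      rwa [Nat.cast_zero, Cardinal.aleph_zero, Cardinal.ord_aleph0] at this
    have henc : ∀ x : Λ, ∃ m : ℕ, f x = m := fun x => Ordinal.lt_omega0.mp (hω x)
    choose enc henc using henc
    have hencinj : Function.Injective enc := by
      intro a b hab
      apply hinj
      rw [henc a, henc b, hab]
    refine ⟨fun t => enc (t 0), fun _ => 0, ?_⟩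
    intro t t' hc _
    funext m
    have hm : m = 0 := Fin.fin_one_eq_zero m
    subst hm
    exact hencinj hc
  | succ n IH =>
    intro Λ f hinj hf
    classical
    have hcard : ∀ z : Λ, (f z + 1).card ≤ Cardinal.aleph n := by
      intro z
      have h1 : (f z).card < Cardinal.aleph (n + 1 : ℕ) := (Cardinal.lt_ord).mp (hf z)
      have h2 : (f z).card ≤ Cardinal.aleph n := by
        rw [Nat.cast_add, Nat.cast_one, Ordinal.add_one_eq_succ, Cardinal.aleph_succ] at h1
        exact Order.lt_succ_iff.mp h1
      rw [Ordinal.add_one_eq_succ, Ordinal.card_succ]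
      calc (f z).card + 1 ≤ Cardinal.aleph n + 1 := by gcongr
        _ = Cardinal.aleph n := Cardinal.add_one_of_aleph0_le (Cardinal.aleph0_le_aleph _)
    have hemb : ∀ z : Λ, ∃ g : {x : Λ // f x ≤ f z} → Ordinal.{v},
        Function.Injective g ∧ ∀ x, g x < (Cardinal.aleph n).ord := by
      intro z
      have hle : #(Set.Iio (f z + 1)) ≤ #(Set.Iio ((Cardinal.aleph n).ord : Ordinal.{v})) := by
        rw [Ordinal.mk_Iio_ordinal, Ordinal.mk_Iio_ordinal, Cardinal.card_ord]
        exact Cardinal.lift_le.mpr (hcard z)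
      obtain ⟨e⟩ := (Cardinal.le_def _ _).mp hle
      refine ⟨fun x => (e ⟨f x.1, ?_⟩).1, ?_, fun x => (e _).2⟩
      · exact Set.mem_Iio.mpr (lt_of_le_of_lt x.2 (lt_add_one _))
      · intro a b hab
        have h3 := e.injective (Subtype.ext hab)
        have h4 : f a.1 = f b.1 := congrArg Subtype.val h3
        exact Subtype.ext (hinj h4)
    -- colorings of bounded tuples, defined on all tuples
    have hIH : ∀ z : Λ, ∃ (cc : (Fin (n + 1) → Λ) → ℕ) (dd : ℕ → Fin (n + 1)),
        ∀ s s' : Fin (n + 1) → Λ, (∀ m, f (s m) ≤ f z) → (∀ m, f (s' m) ≤ f z) →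
          cc s = cc s' → (∀ m, m ≠ dd (cc s) → s m = s' m) → s = s' := by
      intro z
      obtain ⟨g, hg1, hg2⟩ := hemb z
      obtain ⟨c0, d0, h0⟩ := IH _ g hg1 hg2
      refine ⟨fun s => if h : ∀ m, f (s m) ≤ f z then c0 (fun m => ⟨s m, h m⟩) else 0,
        d0, ?_⟩
      intro s s' hs hs' hcc hag
      have e1 : (if h : ∀ m, f (s m) ≤ f z then c0 (fun m => ⟨s m, h m⟩) else 0)
          = c0 (fun m => ⟨s m, hs m⟩) := dif_pos hs
      have e2 : (if h : ∀ m, f (s' m) ≤ f z then c0 (fun m => ⟨s' m, h m⟩) else 0)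
          = c0 (fun m => ⟨s' m, hs' m⟩) := dif_pos hs'
      beta_reduce at hcc hag
      rw [e1, e2] at hcc
      rw [e1] at hag
      have h5 := h0 (fun m => ⟨s m, hs m⟩) (fun m => ⟨s' m, hs' m⟩) hcc
        (fun m hm => Subtype.ext (hag m hm))
      funext m
      exact congrArg Subtype.val (congrFun h5 m)
    choose cz dz hz using hIH
    have hmax : ∀ t : Fin (n + 2) → Λ, ∃ j, ∀ m, f (t m) ≤ f (t j) :=
      fun t => Finite.exists_max (fun m => f (t m))
    choose jmax hjmax using hmax
    let rest : (Fin (n + 2) → Λ) → (Fin (n + 1) → Λ) :=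
      fun t m => t ((jmax t).succAbove m)
    let kk : (Fin (n + 2) → Λ) → ℕ := fun t => cz (t (jmax t)) (rest t)
    let ii : (Fin (n + 2) → Λ) → Fin (n + 1) := fun t => dz (t (jmax t)) (kk t)
    let c : (Fin (n + 2) → Λ) → ℕ :=
      fun t => Encodable.encode ((jmax t, kk t, ii t) : Fin (n + 2) × ℕ × Fin (n + 1))
    let d : ℕ → Fin (n + 2) := fun k =>
      (((Encodable.decode k : Option (Fin (n + 2) × ℕ × Fin (n + 1)))).map
        (fun p => p.1.succAbove p.2.2)).getD 0
    refine ⟨c, d, ?_⟩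
    intro t t' hc hagree
    have hdec : (Encodable.decode (c t) : Option (Fin (n + 2) × ℕ × Fin (n + 1)))
        = some (jmax t, kk t, ii t) := Encodable.encodek _
    have hd : d (c t) = (jmax t).succAbove (ii t) := by
      show (((Encodable.decode (c t) : Option (Fin (n + 2) × ℕ × Fin (n + 1)))).map
        (fun p => p.1.succAbove p.2.2)).getD 0 = _
      rw [hdec]
      rfl
    have htrip : ((jmax t, kk t, ii t) : Fin (n + 2) × ℕ × Fin (n + 1))
        = (jmax t', kk t', ii t') := Encodable.encode_injective hc
    have hj : jmax t = jmax t' := congrArg Prod.fst htrip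
    have hkk : kk t = kk t' := congrArg (fun p => p.2.1) htrip
    have hne : jmax t ≠ d (c t) := by
      rw [hd]; exact (Fin.succAbove_ne _ _).symm
    have hzj : t (jmax t) = t' (jmax t) := hagree _ hne
    have hzz : t' (jmax t') = t (jmax t) := by rw [← hj]; exact hzj.symm
    have hmem : ∀ m, f (rest t m) ≤ f (t (jmax t)) := fun m => hjmax t _
    have hmem' : ∀ m, f (rest t' m) ≤ f (t (jmax t)) := by
      intro m
      have h1 : f (rest t' m) ≤ f (t' (jmax t')) := hjmax t' _
      rwa [hzz] at h1
    have hkk2 : kk t' = cz (t (jmax t)) (rest t') := by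
      show cz (t' (jmax t')) (rest t') = cz (t (jmax t)) (rest t')
      rw [hzz]
    have hag2 : ∀ m : Fin (n + 1), m ≠ dz (t (jmax t)) (cz (t (jmax t)) (rest t)) →
        rest t m = rest t' m := by
      intro m hm
      have h1 : (jmax t).succAbove m ≠ d (c t) := by
        rw [hd]
        exact fun h => hm (Fin.succAbove_right_injective h)
      have h2 := hagree _ h1
      show t ((jmax t).succAbove m) = t' ((jmax t').succAbove m)
      rw [← hj]
      exact h2
    have hre : rest t = rest t' :=
      hz (t (jmax t)) (rest t) (rest t') hmem hmem' (hkk.trans hkk2) hag2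
    funext m
    rcases eq_or_ne m (jmax t) with rfl | hmj
    · exact hzj
    · obtain ⟨m', rfl⟩ := Fin.exists_succAbove_eq hmj
      have h5 : t ((jmax t).succAbove m') = t' ((jmax t').succAbove m') := congrFun hre m'
      rwa [← hj] at h5

theorem stmt15 (n : ℕ) :
    ∃ c : (Fin (n + 1) → {o : Ordinal // o < (Cardinal.aleph n).ord}) → ℕ,
      ∀ F : List {o : Ordinal // o < (Cardinal.aleph n).ord} →
          {o : Ordinal // o < (Cardinal.aleph n).ord},
        (∀ x, x ≤ F [x]) →
        (∀ l₁ l₂, l₂.length ≤ n + 1 → l₁.Sublist l₂ → F l₁ ≤ F l₂) →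
        ¬ ∃ k : ℕ, ∀ σ : Fin (n + 1) →
              List {o : Ordinal // o < (Cardinal.aleph n).ord},
            (∀ i : Fin (n + 1), (σ i).length = (i : ℕ) + 1) →
            (∀ i j : Fin (n + 1), i ≤ j → (σ i).Sublist (σ j)) →
            c (fun i => F (σ i)) = k := by
  classical
  obtain ⟨c, d, hcd⟩ := kur n {o : Ordinal // o < (Cardinal.aleph n).ord}
    (fun x => x.1) (fun a b h => Subtype.ext h) (fun x => x.2)
  refine ⟨c, ?_⟩
  intro F hF1 hF2
  rintro ⟨k, hk⟩
  have hlim : Order.IsSuccLimit ((Cardinal.aleph n).ord) :=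
    Cardinal.isSuccLimit_ord (Cardinal.aleph0_le_aleph _)
  set i : Fin (n + 1) := d k with hidef
  have ha0 : (0 : Ordinal) < (Cardinal.aleph n).ord := hlim.pos
  set a : {o : Ordinal // o < (Cardinal.aleph n).ord} := ⟨0, ha0⟩ with hadef
  set l : List {o : Ordinal // o < (Cardinal.aleph n).ord} := List.replicate i.val a with hldef
  set v : {o : Ordinal // o < (Cardinal.aleph n).ord} := F (l ++ [a]) with hvdef
  have hx0 : v.1 + 1 < (Cardinal.aleph n).ord := by
    rw [Ordinal.add_one_eq_succ]
    exact hlim.succ_lt v.2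
  set x : {o : Ordinal // o < (Cardinal.aleph n).ord} := ⟨v.1 + 1, hx0⟩ with hxdef
  have hvx : v < x := by
    rw [← Subtype.coe_lt_coe]
    show v.1 < v.1 + 1
    rw [Ordinal.add_one_eq_succ]
    exact Order.lt_succ _
  -- key inequality
  have hlen1 : (l ++ [x]).length = i.val + 1 := by simp [hldef]
  have hkey : v < F (l ++ [x]) := by
    refine lt_of_lt_of_le hvx (le_trans (hF1 x) (hF2 [x] (l ++ [x]) ?_ ?_))
    · rw [hlen1]; exact Nat.add_le_add_right (Nat.le_of_lt_succ i.isLt) 1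
    · exact List.sublist_append_right l [x]
  -- the two chains
  set σ : Fin (n + 1) → List {o : Ordinal // o < (Cardinal.aleph n).ord} := fun m =>
    if m.val ≤ i.val then List.replicate (m.val + 1) a
    else l ++ a :: List.replicate (m.val - i.val) x with hσdef
  set τ : Fin (n + 1) → List {o : Ordinal // o < (Cardinal.aleph n).ord} := fun m =>
    if m.val = i.val then l ++ [x] else σ m with hτdef
  have hσi : σ i = l ++ [a] := by
    simp only [hσdef, if_pos (le_refl i.val)]
    rw [hldef, ← List.replicate_succ']
  have hτi : τ i = l ++ [x] := by simp only [hτdef, if_pos rfl]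
  have hστ : ∀ m : Fin (n + 1), m ≠ i → σ m = τ m := by
    intro m hm
    have : m.val ≠ i.val := fun h => hm (Fin.ext h)
    simp only [hτdef, if_neg this]
  -- lengths
  have hσlen : ∀ m : Fin (n + 1), (σ m).length = m.val + 1 := by
    intro m
    simp only [hσdef]
    split
    · simp
    · rename_i h
      simp only [List.length_append, List.length_cons, List.length_replicate, hldef]
      omega
  have hτlen : ∀ m : Fin (n + 1), (τ m).length = m.val + 1 := by
    intro m
    simp only [hτdef]
    split
    · rename_i h
      simp only [List.length_append, List.length_replicate, List.length_cons,
        List.length_nil, hldef]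
      omega
    · exact hσlen m
  -- sublist chains
  have hσsub : ∀ m m' : Fin (n + 1), m ≤ m' → (σ m).Sublist (σ m') := by
    intro m m' hmm
    rw [Fin.le_def] at hmm
    simp only [hσdef]
    rcases le_or_gt m'.val i.val with h' | h'
    · rw [if_pos (le_trans hmm h'), if_pos h']
      exact (List.replicate_sublist_replicate a).mpr (Nat.add_le_add_right hmm 1)
    · rw [if_neg (not_le.mpr h')]
      rcases le_or_gt m.val i.val with h | h
      · rw [if_pos h]
        refine List.Sublist.trans
          ((List.replicate_sublist_replicate a).mpr (Nat.add_le_add_right h 1)) ?_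
        rw [List.replicate_succ', ← hldef]
        refine (List.append_sublist_append_left l).mpr ?_
        exact List.cons_sublist_cons.mpr (List.nil_sublist _)
      · rw [if_neg (not_le.mpr h)]
        refine (List.append_sublist_append_left l).mpr ?_
        refine List.cons_sublist_cons.mpr ?_
        exact (List.replicate_sublist_replicate x).mpr (by omega)
  have hτsub : ∀ m m' : Fin (n + 1), m ≤ m' → (τ m).Sublist (τ m') := by
    intro m m' hmm
    have hmm' := hmm
    rw [Fin.le_def] at hmm'
    simp only [hτdef]
    rcases eq_or_ne m.val i.val with h | h
    · rw [if_pos h]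
      rcases eq_or_ne m'.val i.val with h2 | h2
      · rw [if_pos h2]
      · rw [if_neg h2]
        have h3 : i.val < m'.val := by omega
        simp only [hσdef, if_neg (not_le.mpr h3)]
        refine (List.append_sublist_append_left l).mpr ?_
        have : [x].Sublist (List.replicate (m'.val - i.val) x) := by
          have : List.replicate 1 x = [x] := rfl
          rw [← this]
          exact (List.replicate_sublist_replicate x).mpr (by omega)
        exact this.cons _
    · rw [if_neg h]
      rcases eq_or_ne m'.val i.val with h2 | h2
      · rw [if_pos h2]
        have h3 : m.val < i.val := by omega
        simp only [hσdef, if_pos (Nat.le_of_lt h3)]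
        refine List.Sublist.trans
          ((List.replicate_sublist_replicate a).mpr (by omega : m.val + 1 ≤ i.val)) ?_
        rw [hldef]
        exact List.sublist_append_left _ _
      · rw [if_neg h2]
        exact hσsub m m' hmm
  -- derive the contradiction
  have hcσ : c (fun m => F (σ m)) = k := hk σ hσlen hσsub
  have hcτ : c (fun m => F (τ m)) = k := hk τ hτlen hτsub
  have heq : (fun m => F (σ m)) = (fun m => F (τ m)) := by
    refine hcd _ _ (hcσ.trans hcτ.symm) ?_
    intro m hm
    rw [hcσ, ← hidef] at hm
    rw [hστ m hm]
  have hFi : F (σ i) = F (τ i) := congrFun heq i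
  rw [hσi, hτi, ← hvdef] at hFi
  exact absurd hFi (ne_of_lt hkey)
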